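/- The map X : ℝ² → ℝ², X(a₁,a₂) = (X₁(a₁,a₂), X₂(a₁,a₂)), is differentiable, and for every (a₁,a₂) ∈ ℝ² the absolute value of the determinant of its Jacobian matrix at (a₁,a₂) equals 4π²·|S_ρ(a₁,a₂)|. -/

import Mathlib

open Real

noncomputable section

/-- `X₁` for `C₂`. -/
def X1 (a : ℝ × ℝ) : ℝ :=
  2 * (Real.cos (2 * π * a.1) + Real.cos (2 * π * (a.1 - a.2)))

/-- `X₂` for `C₂`. -/
def X2 (a : ℝ × ℝ) : ℝ :=
  2 * (Real.cos (2 * π * a.2) + Real.cos (2 * π * (2 * a.1 - a.2)))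

/-- The `X`-transform of `C₂`. -/
def Xmap (a : ℝ × ℝ) : ℝ × ℝ := (X1 a, X2 a)

/-- The lowest antisymmetric orbit function `S_ρ` of `C₂`. -/
def Srho (a : ℝ × ℝ) : ℝ :=
  2 * (Real.cos (2 * π * (a.1 + a.2)) - Real.cos (2 * π * (-a.1 + 2 * a.2)) -
    Real.cos (2 * π * (3 * a.1 - a.2)) + Real.cos (2 * π * (3 * a.1 - 2 * a.2)))

/-- The Jacobian matrix of `Xmap`, as a continuous linear map. -/
def DC2 (a : ℝ × ℝ) : (ℝ × ℝ) →L[ℝ] (ℝ × ℝ) :=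
  LinearMap.toContinuousLinearMap (Matrix.toLin (Module.Basis.finTwoProd ℝ) (Module.Basis.finTwoProd ℝ)
    !![-4 * π * Real.sin (2 * π * a.1) - 4 * π * Real.sin (2 * π * (a.1 - a.2)),
        4 * π * Real.sin (2 * π * (a.1 - a.2));
       -8 * π * Real.sin (2 * π * (2 * a.1 - a.2)),
       -4 * π * Real.sin (2 * π * a.2) + 4 * π * Real.sin (2 * π * (2 * a.1 - a.2))])

lemma hasFDerivAt_Xmap (a : ℝ × ℝ) : HasFDerivAt Xmap (DC2 a) a := by
  rw [DC2, Matrix.toLin_finTwoProd_toContinuousLinearMap]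
  have i1 : HasFDerivAt (fun x : ℝ × ℝ => 2 * π * x.1)
      ((2 * π) • ContinuousLinearMap.fst ℝ ℝ ℝ) a := hasFDerivAt_fst.const_mul (2 * π)
  have i2 : HasFDerivAt (fun x : ℝ × ℝ => 2 * π * (x.1 - x.2))
      ((2 * π) • (ContinuousLinearMap.fst ℝ ℝ ℝ - ContinuousLinearMap.snd ℝ ℝ ℝ)) a :=
    (hasFDerivAt_fst.sub hasFDerivAt_snd).const_mul (2 * π)
  have i3 : HasFDerivAt (fun x : ℝ × ℝ => 2 * π * x.2)
      ((2 * π) • ContinuousLinearMap.snd ℝ ℝ ℝ) a := hasFDerivAt_snd.const_mul (2 * π)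
  have i4 : HasFDerivAt (fun x : ℝ × ℝ => 2 * π * (2 * x.1 - x.2))
      ((2 * π) • ((2 : ℝ) • ContinuousLinearMap.fst ℝ ℝ ℝ - ContinuousLinearMap.snd ℝ ℝ ℝ))
      a := ((hasFDerivAt_fst.const_mul (2:ℝ)).sub hasFDerivAt_snd).const_mul (2 * π)
  have c1 := (Real.hasDerivAt_cos (2 * π * a.1)).comp_hasFDerivAt a i1
  have c2 := (Real.hasDerivAt_cos (2 * π * (a.1 - a.2))).comp_hasFDerivAt a i2
  have c3 := (Real.hasDerivAt_cos (2 * π * a.2)).comp_hasFDerivAt a i3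
  have c4 := (Real.hasDerivAt_cos (2 * π * (2 * a.1 - a.2))).comp_hasFDerivAt a i4
  have hX1 : HasFDerivAt X1 _ a := (c1.add c2).const_mul 2
  have hX2 : HasFDerivAt X2 _ a := (c3.add c4).const_mul 2
  convert HasFDerivAt.prodMk hX1 hX2 using 1
  · rfl
  · rfl
  · rfl
  · rfl
  ext x <;> simp <;> ring

lemma sinsin (A B : ℝ) :
    Real.cos (A - B) - Real.cos (A + B) = 2 * Real.sin A * Real.sin B := by
  rw [Real.cos_sub, Real.cos_add]; ring

lemma det_DC2 (a : ℝ × ℝ) : (DC2 a).det = -(4 * π ^ 2) * Srho a := by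
  have h1 := sinsin (2 * π * a.1) (2 * π * a.2)
  rw [show 2 * π * a.1 - 2 * π * a.2 = 2 * π * (a.1 - a.2) by ring,
      show 2 * π * a.1 + 2 * π * a.2 = 2 * π * (a.1 + a.2) by ring] at h1
  have h2 := sinsin (2 * π * (2 * a.1 - a.2)) (2 * π * a.1)
  rw [show 2 * π * (2 * a.1 - a.2) - 2 * π * a.1 = 2 * π * (a.1 - a.2) by ring,
      show 2 * π * (2 * a.1 - a.2) + 2 * π * a.1 = 2 * π * (3 * a.1 - a.2) by ring] at h2
  have h3 := sinsin (2 * π * a.2) (2 * π * (a.1 - a.2))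
  rw [show 2 * π * a.2 - 2 * π * (a.1 - a.2) = 2 * π * (-a.1 + 2 * a.2) by ring,
      show 2 * π * a.2 + 2 * π * (a.1 - a.2) = 2 * π * a.1 by ring] at h3
  have h4 := sinsin (2 * π * (2 * a.1 - a.2)) (2 * π * (a.1 - a.2))
  rw [show 2 * π * (2 * a.1 - a.2) - 2 * π * (a.1 - a.2) = 2 * π * a.1 by ring,
      show 2 * π * (2 * a.1 - a.2) + 2 * π * (a.1 - a.2) = 2 * π * (3 * a.1 - 2 * a.2) by
        ring] at h4
  simp only [DC2, LinearMap.det_toContinuousLinearMap, LinearMap.det_toLin,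
    Matrix.det_fin_two_of, Srho]
  linear_combination (-8 * π ^ 2) * h1 + (8 * π ^ 2) * h2 + (-8 * π ^ 2) * h3 +
    (-8 * π ^ 2) * h4

/-- The `X`-transform of `C₂` is differentiable and the absolute value of
its Jacobian determinant equals `4π²·|S_ρ|`. -/
theorem jacobian_C2 :
    Differentiable ℝ Xmap ∧
    ∀ a : ℝ × ℝ, |(fderiv ℝ Xmap a).det| = 4 * π ^ 2 * |Srho a| := by
  constructor
  · exact fun a => (hasFDerivAt_Xmap a).differentiableAt
  · intro a
    rw [(hasFDerivAt_Xmap a).fderiv, det_DC2, abs_mul, abs_neg,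
      abs_of_pos (by positivity : (0:ℝ) < 4 * π ^ 2)]

end
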